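/- For p₀ ∈ (0,1) and γ ∈ (0,1), set u₀ = (1-γ)Φ⁻¹(p₀) and p* = Φ(γΦ⁻¹(p₀)/(1+γ)). Then the function f(p) = ln(γ) + (1/2)[(Φ⁻¹(p))² − (γΦ⁻¹(p) + u₀)²] is strictly decreasing on (0, p*) and strictly increasing on (p*, 1). -/
import Mathlib


open Real MeasureTheory ProbabilityTheory Set Filter Topology

/-- Standard normal CDF. -/
noncomputable def Phi (x : ℝ) : ℝ :=
  ∫ t in Set.Iic x, Real.exp (-t ^ 2 / 2) / Real.sqrt (2 * Real.pi)

/-- Standard normal quantile function (inverse of `Phi`). -/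
noncomputable def PhiInv : ℝ → ℝ := Function.invFun Phi

/-- Standard normal density. -/
noncomputable def ndens (x : ℝ) : ℝ :=
  Real.exp (-x ^ 2 / 2) / Real.sqrt (2 * Real.pi)

/-- Normal distortion function. -/
noncomputable def wdist (p₀ γ p : ℝ) : ℝ :=
  Phi (γ * PhiInv p + (1 - γ) * PhiInv p₀)

lemma ndens_eq (t : ℝ) : Real.exp (-t ^ 2 / 2) / Real.sqrt (2 * Real.pi)
    = Real.exp (-(1/2) * t ^ 2) * (Real.sqrt (2 * Real.pi))⁻¹ := by
  rw [div_eq_mul_inv]; ring_nf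

lemma integrable_ndens : Integrable (fun t : ℝ => Real.exp (-t ^ 2 / 2) / Real.sqrt (2 * Real.pi)) := by
  simp only [ndens_eq]
  exact (integrable_exp_neg_mul_sq (by norm_num : (0:ℝ) < 1/2)).mul_const _

lemma ndens_pos (t : ℝ) : 0 < Real.exp (-t ^ 2 / 2) / Real.sqrt (2 * Real.pi) :=
  div_pos (Real.exp_pos _) (Real.sqrt_pos.2 (by positivity))

lemma integral_ndens : ∫ t : ℝ, Real.exp (-t ^ 2 / 2) / Real.sqrt (2 * Real.pi) = 1 := by
  simp only [ndens_eq]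
  rw [MeasureTheory.integral_mul_const, integral_gaussian]
  rw [show Real.pi / (1/2) = 2 * Real.pi by ring]
  field_simp

lemma Phi_sub_Phi (a b : ℝ) : Phi b - Phi a = ∫ t in a..b, Real.exp (-t ^ 2 / 2) / Real.sqrt (2 * Real.pi) :=
  intervalIntegral.integral_Iic_sub_Iic integrable_ndens.integrableOn integrable_ndens.integrableOn

lemma Phi_strictMono : StrictMono Phi := by
  intro a b hab
  have h2 : 0 < ∫ t in a..b, Real.exp (-t ^ 2 / 2) / Real.sqrt (2 * Real.pi) :=
    intervalIntegral.intervalIntegral_pos_of_pos integrable_ndens.intervalIntegrable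
      (fun t => ndens_pos t) hab
  have := Phi_sub_Phi a b
  linarith

lemma Phi_continuous : Continuous Phi := by
  have h := intervalIntegral.continuous_primitive
    (fun a b => integrable_ndens.intervalIntegrable (a := a) (b := b)) 0
  have hPhi : ∀ x, Phi x = Phi 0 + ∫ t in (0:ℝ)..x, Real.exp (-t ^ 2 / 2) / Real.sqrt (2 * Real.pi) := by
    intro x; linarith [Phi_sub_Phi 0 x]
  have heq : Phi = fun x => Phi 0 + ∫ t in (0:ℝ)..x, Real.exp (-t ^ 2 / 2) / Real.sqrt (2 * Real.pi) := funext hPhi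
  rw [heq]
  exact continuous_const.add h

lemma Phi_tendsto_atBot : Tendsto Phi atBot (𝓝 0) := by
  have h := MeasureTheory.intervalIntegral_tendsto_integral_Iic (μ := volume)
    (a := fun x : ℝ => x) 0 (integrable_ndens.integrableOn) tendsto_id
  have h2 : Tendsto (fun x : ℝ => Phi 0 - Phi x) atBot (𝓝 (Phi 0)) := by
    exact Tendsto.congr (fun x => (Phi_sub_Phi x 0).symm) h
  have := (tendsto_const_nhds (x := Phi 0) (f := atBot)).sub h2
  simpa using this

lemma Phi_tendsto_atTop : Tendsto Phi atTop (𝓝 1) := by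
  have h := MeasureTheory.intervalIntegral_tendsto_integral (μ := volume) (l := atTop)
    (a := fun x : ℝ => -x) (b := fun x : ℝ => x) integrable_ndens
    tendsto_neg_atTop_atBot tendsto_id
  rw [integral_ndens] at h
  have h2 : Tendsto (fun x : ℝ => Phi x - Phi (-x)) atTop (𝓝 1) := by
    refine Tendsto.congr (fun x => ?_) h
    exact (Phi_sub_Phi (-x) x).symm
  have h3 : Tendsto (fun x : ℝ => Phi (-x)) atTop (𝓝 0) :=
    Phi_tendsto_atBot.comp tendsto_neg_atTop_atBot
  have := h2.add h3
  simpa using this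

lemma Phi_surj {p : ℝ} (hp : p ∈ Set.Ioo (0:ℝ) 1) : ∃ x, Phi x = p := by
  obtain ⟨a, ha⟩ := (Phi_tendsto_atBot.eventually (eventually_lt_nhds hp.1)).exists
  obtain ⟨b, hb⟩ := (Phi_tendsto_atTop.eventually (eventually_gt_nhds hp.2)).exists
  have hab : a ≤ b := (Phi_strictMono.lt_iff_lt.mp (ha.trans hb)).le
  obtain ⟨x, _, hx⟩ := intermediate_value_Icc hab Phi_continuous.continuousOn ⟨ha.le, hb.le⟩
  exact ⟨x, hx⟩

lemma Phi_PhiInv {p : ℝ} (hp : p ∈ Set.Ioo (0:ℝ) 1) : Phi (PhiInv p) = p :=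
  Function.invFun_eq (Phi_surj hp)

lemma PhiInv_Phi (x : ℝ) : PhiInv (Phi x) = x :=
  Function.leftInverse_invFun Phi_strictMono.injective x

lemma PhiInv_lt_PhiInv {p q : ℝ} (hp : p ∈ Set.Ioo (0:ℝ) 1) (hq : q ∈ Set.Ioo (0:ℝ) 1)
    (hpq : p < q) : PhiInv p < PhiInv q := by
  have h1 := Phi_PhiInv hp
  have h2 := Phi_PhiInv hq
  exact Phi_strictMono.lt_iff_lt.mp (by rw [h1, h2]; exact hpq)

lemma PhiInv_lt_of_lt_Phi {p x : ℝ} (hp : p ∈ Set.Ioo (0:ℝ) 1) (h : p < Phi x) :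
    PhiInv p < x := by
  have h1 := Phi_PhiInv hp
  exact Phi_strictMono.lt_iff_lt.mp (by rw [h1]; exact h)

lemma lt_PhiInv_of_Phi_lt {p x : ℝ} (hp : p ∈ Set.Ioo (0:ℝ) 1) (h : Phi x < p) :
    x < PhiInv p := by
  have h1 := Phi_PhiInv hp
  exact Phi_strictMono.lt_iff_lt.mp (by rw [h1]; exact h)

lemma Phi_nonneg (x : ℝ) : 0 ≤ Phi x :=
  setIntegral_nonneg measurableSet_Iic (fun t _ => (ndens_pos t).le)

lemma Phi_pos (x : ℝ) : 0 < Phi x :=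
  lt_of_le_of_lt (Phi_nonneg (x - 1)) (Phi_strictMono (by linarith))

lemma Phi_le_one (x : ℝ) : Phi x ≤ 1 :=
  ge_of_tendsto Phi_tendsto_atTop (eventually_atTop.mpr ⟨x, fun y hy => Phi_strictMono.monotone hy⟩)

lemma Phi_lt_one (x : ℝ) : Phi x < 1 :=
  lt_of_lt_of_le (Phi_strictMono (show x < x + 1 by linarith)) (Phi_le_one (x + 1))

lemma quad_anti {γ u xs x y : ℝ} (hγ0 : 0 < γ) (hγ1 : γ < 1)
    (hkey : γ * u = (1 - γ^2) * xs) (hxy : x < y) (hy : y ≤ xs) :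
    y^2 - (γ*y+u)^2 < x^2 - (γ*x+u)^2 := by
  have h2 : γ * u * (y - x) = (1 - γ^2) * xs * (y - x) := by rw [hkey]
  have H : 0 < (1 - γ^2) * ((y - x) * (2*xs - x - y)) :=
    mul_pos (by nlinarith) (mul_pos (by linarith) (by linarith))
  nlinarith [H, h2]

lemma quad_mono {γ u xs x y : ℝ} (hγ0 : 0 < γ) (hγ1 : γ < 1)
    (hkey : γ * u = (1 - γ^2) * xs) (hxy : x < y) (hx : xs ≤ x) :
    x^2 - (γ*x+u)^2 < y^2 - (γ*y+u)^2 := by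
  have h2 : γ * u * (y - x) = (1 - γ^2) * xs * (y - x) := by rw [hkey]
  have H : 0 < (1 - γ^2) * ((y - x) * (x + y - 2*xs)) :=
    mul_pos (by nlinarith) (mul_pos (by linarith) (by linarith))
  nlinarith [H, h2]

theorem stmt3 (p₀ γ : ℝ) (hp₀ : p₀ ∈ Set.Ioo (0:ℝ) 1) (hγ : γ ∈ Set.Ioo (0:ℝ) 1) :
    StrictAntiOn
      (fun p => Real.log γ + (1/2) * ((PhiInv p)^2 - (γ * PhiInv p + (1 - γ) * PhiInv p₀)^2))
      (Set.Ioo 0 (Phi (γ * PhiInv p₀ / (1 + γ)))) ∧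
    StrictMonoOn
      (fun p => Real.log γ + (1/2) * ((PhiInv p)^2 - (γ * PhiInv p + (1 - γ) * PhiInv p₀)^2))
      (Set.Ioo (Phi (γ * PhiInv p₀ / (1 + γ))) 1) := by
  obtain ⟨hγ0, hγ1⟩ := hγ
  set c := PhiInv p₀ with hc
  set xs := γ * c / (1 + γ) with hxs
  have hγ1' : (0:ℝ) < 1 + γ := by linarith
  have hkey : γ * ((1 - γ) * c) = (1 - γ^2) * xs := by
    rw [hxs]; field_simp; ring
  have hps1 : Phi xs < 1 := Phi_lt_one xs
  have hps0 : 0 < Phi xs := Phi_pos xs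
  constructor
  · intro p hp q hq hpq
    have hp' : p ∈ Set.Ioo (0:ℝ) 1 := ⟨hp.1, hp.2.trans hps1⟩
    have hq' : q ∈ Set.Ioo (0:ℝ) 1 := ⟨hq.1, hq.2.trans hps1⟩
    have hxy : PhiInv p < PhiInv q := PhiInv_lt_PhiInv hp' hq' hpq
    have hy : PhiInv q < xs := PhiInv_lt_of_lt_Phi hq' hq.2
    have := quad_anti hγ0 hγ1 hkey hxy hy.le
    simp only
    linarith
  · intro p hp q hq hpq
    have hp' : p ∈ Set.Ioo (0:ℝ) 1 := ⟨hps0.trans hp.1, hp.2⟩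
    have hq' : q ∈ Set.Ioo (0:ℝ) 1 := ⟨hps0.trans hq.1, hq.2⟩
    have hxy : PhiInv p < PhiInv q := PhiInv_lt_PhiInv hp' hq' hpq
    have hx : xs < PhiInv p := lt_PhiInv_of_Phi_lt hp' hp.1
    have := quad_mono hγ0 hγ1 hkey hxy hx.le
    simp only
    linarith
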